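/- Let m ≥ 1 be an integer, R > 0, and ζ = exp(2πi/m). Suppose Ψ : ℂ → ℂ is holomorphic on {w ∈ ℂ : |w| > R^m}, Φ : ℂ → ℂ is holomorphic on {z ∈ ℂ : |z| > R}, Φ(z)^m = Ψ(z^m) for all |z| > R, and Φ(z)/z → 1 as |z| → ∞. Then Φ(ζz) = ζΦ(z) for all z with |z| > R. -/

import Mathlib

open Filter

/-- The `m`-th-root transform `Φ` of an exterior map `Ψ` (i.e. `Φ(z)^m = Ψ(z^m)` with
`Φ(z)/z → 1` at infinity) is `m`-fold rotationally symmetric: `Φ(ζz) = ζΦ(z)` for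
`ζ = exp(2πi/m)`. -/
theorem mth_root_transform_rotationally_symmetric
    (m : ℕ) (hm : 1 ≤ m) (R : ℝ) (hR : 0 < R)
    (ζ : ℂ) (hζ : ζ = Complex.exp (2 * Real.pi * Complex.I / m))
    (Ψ Φ : ℂ → ℂ)
    (hΨ : DifferentiableOn ℂ Ψ {w : ℂ | R ^ m < ‖w‖})
    (hΦ : DifferentiableOn ℂ Φ {z : ℂ | R < ‖z‖})
    (hpow : ∀ z : ℂ, R < ‖z‖ → Φ z ^ m = Ψ (z ^ m))
    (hlim : Tendsto (fun z : ℂ => Φ z / z) (comap norm atTop) (nhds 1)) :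
    ∀ z : ℂ, R < ‖z‖ → Φ (ζ * z) = ζ * Φ z := by
  have hm0 : (m : ℂ) ≠ 0 := Nat.cast_ne_zero.2 (Nat.one_le_iff_ne_zero.mp hm)
  have hζm : ζ ^ m = 1 := by
    rw [hζ, ← Complex.exp_nat_mul,
      show (m : ℂ) * (2 * Real.pi * Complex.I / m) = 2 * Real.pi * Complex.I by
        field_simp]
    exact Complex.exp_two_pi_mul_I
  have hζ0 : ζ ≠ 0 := hζ ▸ Complex.exp_ne_zero _
  have hζnorm : ‖ζ‖ = 1 := by
    rw [hζ, show 2 * Real.pi * Complex.I / m = ((2 * Real.pi / m : ℝ) : ℂ) * Complex.I by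
      push_cast; ring, Complex.norm_exp_ofReal_mul_I]
  have hnormmul : ∀ z : ℂ, ‖ζ * z‖ = ‖z‖ := fun z => by rw [norm_mul, hζnorm, one_mul]
  set l := comap (norm : ℂ → ℝ) atTop with hl
  have hnt : Tendsto (norm : ℂ → ℝ) l atTop := tendsto_comap
  have hmul : Tendsto (fun z : ℂ => ζ * z) l l := by
    have hc : (norm ∘ fun z : ℂ => ζ * z) = (norm : ℂ → ℝ) := funext fun z => hnormmul z
    rw [hl, tendsto_comap_iff, hc]
    exact tendsto_comap
  have hlim2 : Tendsto (fun z : ℂ => Φ (ζ * z) / (ζ * z)) l (nhds 1) := hlim.comp hmul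
  set T : ℂ → ℂ := fun z => Φ (ζ * z) / (ζ * z) * ζ * (Φ z / z)⁻¹ with hT
  have hTlim : Tendsto T l (nhds ζ) := by
    have h2 := (hlim2.mul (tendsto_const_nhds (x := ζ))).mul (hlim.inv₀ one_ne_zero)
    rw [hT]
    simpa using h2
  have hSfin : ({x : ℂ | x ^ m = 1}).Finite := by
    apply Set.Finite.subset (Polynomial.nthRoots m (1 : ℂ)).finite_toSet
    intro x hx
    exact (Polynomial.mem_nthRoots hm).mpr hx
  have hevR : ∀ᶠ z : ℂ in l, R < ‖z‖ := hnt.eventually_gt_atTop R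
  have hevΦ : ∀ᶠ z : ℂ in l, Φ z ≠ 0 := by
    filter_upwards [hlim.eventually_ne one_ne_zero] with z hz
    intro h; exact hz (by simp [h])
  have hevq : ∀ᶠ z : ℂ in l, T z = Φ (ζ * z) / Φ z := by
    filter_upwards [hevR, hevΦ] with z hzR hzΦ
    have hz0 : z ≠ 0 := by
      intro h; rw [h] at hzR; simp only [norm_zero] at hzR; linarith
    rw [hT]
    field_simp
  have hevS : ∀ᶠ z : ℂ in l, T z ∈ {x : ℂ | x ^ m = 1} := by
    filter_upwards [hevR, hevΦ, hevq] with z hzR hzΦ hq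
    have hpowz : Φ (ζ * z) ^ m = Φ z ^ m := by
      rw [hpow _ (by rw [hnormmul]; exact hzR), hpow _ hzR, mul_pow, hζm, one_mul]
    rw [hq]
    show (Φ (ζ * z) / Φ z) ^ m = 1
    rw [div_pow, hpowz, div_self (pow_ne_zero _ hzΦ)]
  have hne : ∀ᶠ z : ℂ in l, T z ∉ {x : ℂ | x ^ m = 1} \ {ζ} := by
    have hcl : IsClosed ({x : ℂ | x ^ m = 1} \ {ζ}) :=
      (hSfin.subset Set.diff_subset).isClosed
    exact hTlim.eventually (hcl.isOpen_compl.mem_nhds (by simp))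
  have key : ∀ᶠ z : ℂ in l, Φ (ζ * z) = ζ * Φ z := by
    filter_upwards [hevS, hne, hevq, hevΦ] with z hS hn hq hzΦ
    have hTζ : T z = ζ := by
      by_contra h
      exact hn ⟨hS, h⟩
    rw [hq, div_eq_iff hzΦ] at hTζ
    rw [hTζ]
  rw [hl, eventually_comap, eventually_atTop] at key
  obtain ⟨a, ha⟩ := key
  set U : Set ℂ := {z : ℂ | R < ‖z‖} with hU
  have hUopen : IsOpen U := isOpen_lt continuous_const continuous_norm
  have hUconn : IsPreconnected U := by
    have himg : U = Complex.exp '' {w : ℂ | Real.log R < w.re} := by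
      ext z
      simp only [hU, Set.mem_setOf_eq, Set.mem_image]
      constructor
      · intro hz
        have hz0 : z ≠ 0 := by
          intro h; rw [h, norm_zero] at hz; linarith
        obtain ⟨w, hw⟩ : z ∈ Set.range Complex.exp := by
          rw [Complex.range_exp]; exact hz0
        refine ⟨w, ?_, hw⟩
        rw [Real.log_lt_iff_lt_exp hR, ← Complex.norm_exp, hw]
        exact hz
      · rintro ⟨w, hw, rfl⟩
        rw [Complex.norm_exp]
        exact (Real.log_lt_iff_lt_exp hR).mp hw
    rw [himg]
    exact ((convex_halfSpace_re_gt (Real.log R)).isPreconnected).image _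
      Complex.continuous_exp.continuousOn
  have hmaps : Set.MapsTo (fun z : ℂ => ζ * z) U U := by
    intro z hz
    show R < ‖ζ * z‖
    rw [hnormmul]
    exact hz
  have hf : AnalyticOnNhd ℂ (fun z : ℂ => Φ (ζ * z)) U :=
    ((hΦ.comp ((differentiable_id.const_mul ζ).differentiableOn) hmaps)).analyticOnNhd hUopen
  have hg : AnalyticOnNhd ℂ (fun z : ℂ => ζ * Φ z) U :=
    (hΦ.const_mul ζ).analyticOnNhd hUopen
  set z₀ : ℂ := ((max R a + 1 : ℝ) : ℂ) with hz₀
  have hz₀norm : ‖z₀‖ = max R a + 1 := by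
    rw [hz₀, Complex.norm_real, Real.norm_eq_abs, abs_of_pos]
    have : (0:ℝ) < R := hR
    have := le_max_left R a
    linarith
  have hz₀U : z₀ ∈ U := by
    rw [hU, Set.mem_setOf_eq, hz₀norm]
    have := le_max_left R a; linarith
  have hfreq : ∃ᶠ z in nhdsWithin z₀ {z₀}ᶜ, Φ (ζ * z) = ζ * Φ z := by
    have hev : ∀ᶠ z in nhds z₀, Φ (ζ * z) = ζ * Φ z := by
      have hopen : IsOpen {z : ℂ | a < ‖z‖} := isOpen_lt continuous_const continuous_norm
      have hmem : z₀ ∈ {z : ℂ | a < ‖z‖} := by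
        rw [Set.mem_setOf_eq, hz₀norm]
        have := le_max_right R a; linarith
      filter_upwards [hopen.mem_nhds hmem] with z hz
      exact ha ‖z‖ (le_of_lt hz) z rfl
    exact (hev.filter_mono nhdsWithin_le_nhds).frequently
  intro z hz
  exact hf.eqOn_of_preconnected_of_frequently_eq hg hUconn hz₀U hfreq hz
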